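/- arXiv:2505.08308 — 2 statements merged into one kernel-verified Lean document; each statement's English description precedes it below -/
import Mathlib

section
/- For every real c > 0 there exists an integer K such that for every integer k ≥ K, all nonnegative integers k₀, k₁ with k₀ + k₁ ≤ k, every real 0 ≤ β ≤ 1, and n = ⌈c·k³⌉, there exists an (n, k₀, k₁, 1/√k, β)-mapping family of size at most 8 · binom(k₁, ⌈β·k₁⌉)⁻¹ · (√k)^{⌈β·k₁⌉} · e^{(k₀+k₁)/√k} · k · ln(c·k). -/
open Finset

/-- An `(n,k₀,k₁,α,β)`-mapping family: every function maps exactly `⌈α·n⌉` elements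
to `1`, and for all disjoint `S₀, S₁ ⊆ [n]` with `|S₀| = k₀`, `|S₁| = k₁` some
function maps all of `S₀` to `0` and exactly `⌈β·k₁⌉` elements of `S₁` to `1`. -/
def IsMappingFamily (n k₀ k₁ : ℕ) (α β : ℝ) (F : Finset (Fin n → Fin 2)) : Prop :=
  (∀ f ∈ F, (Finset.univ.filter fun x => f x = 1).card = ⌈α * (n : ℝ)⌉₊) ∧
  ∀ S₀ S₁ : Finset (Fin n), Disjoint S₀ S₁ → S₀.card = k₀ → S₁.card = k₁ →
    ∃ f ∈ F, (∀ x ∈ S₀, f x = 0) ∧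
      (S₁.filter fun x => f x = 1).card = ⌈β * (k₁ : ℝ)⌉₊

section Helpers
open Nat

lemma cover_lemma {X Y : Type*} [DecidableEq X] [DecidableEq Y] (Ω : Finset X)
    (R : Y → X → Prop) [∀ y x, Decidable (R y x)] (p : ℝ) (hp : 0 < p) (hp1 : p ≤ 1)
    (hΩ : Ω.Nonempty) :
    ∀ (N : ℕ) (P : Finset Y),
      (∀ y ∈ P, p * Ω.card ≤ ((Ω.filter (R y)).card : ℝ)) →
      (1 - p) ^ N * P.card < 1 →
      ∃ F : Finset X, F ⊆ Ω ∧ F.card ≤ N ∧ ∀ y ∈ P, ∃ x ∈ F, R y x := by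
  intro N
  induction N with
  | zero =>
    intro P hcov hN
    have hPe : P = ∅ := by
      by_contra h
      have h1 : 1 ≤ (P.card : ℝ) := by
        exact_mod_cast Finset.card_pos.2 (Finset.nonempty_iff_ne_empty.2 h)
      simp only [pow_zero, one_mul] at hN; linarith
    exact ⟨∅, by simp [hPe]⟩
  | succ N ih =>
    intro P hcov hN
    rcases P.eq_empty_or_nonempty with rfl | hP
    · exact ⟨∅, by simp⟩
    have key : ∃ x ∈ Ω, p * P.card ≤ ((P.filter fun y => R y x).card : ℝ) := by
      by_contra h
      push_neg at h
      have hsum : ∑ x ∈ Ω, ((P.filter fun y => R y x).card : ℝ)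
          = ∑ y ∈ P, ((Ω.filter (R y)).card : ℝ) := by
        simp only [Finset.card_filter]
        push_cast
        rw [Finset.sum_comm]
      have h1 : ∑ x ∈ Ω, ((P.filter fun y => R y x).card : ℝ) < Ω.card * (p * P.card) := by
        have := Finset.sum_lt_sum_of_nonempty hΩ h
        simpa [Finset.sum_const, mul_comm] using this
      have h2 : (Ω.card : ℝ) * (p * P.card) ≤ ∑ y ∈ P, ((Ω.filter (R y)).card : ℝ) := by
        calc (Ω.card : ℝ) * (p * P.card) = ∑ _y ∈ P, p * Ω.card := by
              rw [Finset.sum_const]; push_cast; ring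
          _ ≤ _ := Finset.sum_le_sum hcov
      linarith
    obtain ⟨x, hxΩ, hx⟩ := key
    set P' := P.filter fun y => ¬ R y x with hP'
    have hcard : (P'.card : ℝ) ≤ (1 - p) * P.card := by
      have : P'.card = P.card - (P.filter fun y => R y x).card := by
        rw [hP', Finset.filter_not, Finset.card_sdiff_of_subset (Finset.filter_subset _ _)]
      have hle : (P.filter fun y => R y x).card ≤ P.card := Finset.card_filter_le _ _
      rw [this, Nat.cast_sub hle]
      linarith
    obtain ⟨F, hF1, hF2, hF3⟩ := ih P' (fun y hy => hcov y (Finset.filter_subset _ _ hy)) (by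
      have h1p : (0:ℝ) ≤ 1 - p := by linarith
      calc (1-p)^N * P'.card ≤ (1-p)^N * ((1-p) * P.card) := by
            apply mul_le_mul_of_nonneg_left hcard (pow_nonneg h1p N)
        _ = (1-p)^(N+1) * P.card := by ring
        _ < 1 := hN)
    refine ⟨insert x F, ?_, ?_, ?_⟩
    · exact Finset.insert_subset hxΩ hF1
    · exact (Finset.card_insert_le _ _).trans (Nat.succ_le_succ hF2)
    · intro y hy
      by_cases hr : R y x
      · exact ⟨x, Finset.mem_insert_self _ _, hr⟩
      · obtain ⟨z, hz, hrz⟩ := hF3 y (Finset.mem_filter.2 ⟨hy, hr⟩)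
        exact ⟨z, Finset.mem_insert_of_mem hz, hrz⟩

lemma count_lemma {n : ℕ} (S₀ S₁ : Finset (Fin n)) (hd : Disjoint S₀ S₁)
    (m t : ℕ) (htm : t ≤ m) :
    ((Finset.univ.powersetCard m).filter
        (fun T => (∀ x ∈ S₀, x ∉ T) ∧ (S₁ ∩ T).card = t)).card
      = S₁.card.choose t * (n - (S₀.card + S₁.card)).choose (m - t) := by
  have hcardU : (Finset.univ \ (S₀ ∪ S₁)).card = n - (S₀.card + S₁.card) := by
    rw [Finset.card_sdiff_of_subset (Finset.subset_univ _), Finset.card_univ,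
      Finset.card_union_of_disjoint hd, Fintype.card_fin]
  rw [← hcardU, ← Finset.card_powersetCard, ← Finset.card_powersetCard, ← Finset.card_product]
  apply Finset.card_bij' (fun T _ => (S₁ ∩ T, T \ (S₀ ∪ S₁)))
    (fun q _ => q.1 ∪ q.2)
  · -- hi
    intro T hT
    simp only [Finset.mem_filter, Finset.mem_powersetCard] at hT
    obtain ⟨⟨-, hTm⟩, h0, h1⟩ := hT
    have hTS : T ∩ (S₀ ∪ S₁) = S₁ ∩ T := by
      ext x
      simp only [Finset.mem_inter, Finset.mem_union]
      constructor
      · rintro ⟨hx, h | h⟩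
        · exact absurd hx (h0 x h)
        · exact ⟨h, hx⟩
      · rintro ⟨h, hx⟩; exact ⟨hx, Or.inr h⟩
    simp only [Finset.mem_product, Finset.mem_powersetCard]
    refine ⟨⟨Finset.inter_subset_left, h1⟩, Finset.sdiff_subset_sdiff (Finset.subset_univ _) le_rfl, ?_⟩
    have := Finset.card_sdiff_add_card_inter T (S₀ ∪ S₁)
    rw [hTS, h1, hTm] at this
    omega
  · -- hj
    intro q hq
    simp only [Finset.mem_product, Finset.mem_powersetCard] at hq
    obtain ⟨⟨hA, hAc⟩, hB, hBc⟩ := hq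
    have hdAB : Disjoint q.1 q.2 := by
      refine Finset.disjoint_left.2 fun x hx1 hx2 => ?_
      have := hB hx2
      simp only [Finset.mem_sdiff, Finset.mem_union] at this
      exact this.2 (Or.inr (hA hx1))
    simp only [Finset.mem_filter, Finset.mem_powersetCard]
    refine ⟨⟨Finset.subset_univ _, ?_⟩, ?_, ?_⟩
    · rw [Finset.card_union_of_disjoint hdAB, hAc, hBc]
      omega
    · intro x hx0
      simp only [Finset.mem_union]
      rintro (h | h)
      · exact (Finset.disjoint_left.1 hd hx0) (hA h)
      · have := hB h
        simp only [Finset.mem_sdiff, Finset.mem_union] at this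
        exact this.2 (Or.inl hx0)
    · have : S₁ ∩ (q.1 ∪ q.2) = q.1 := by
        ext x
        simp only [Finset.mem_inter, Finset.mem_union]
        constructor
        · rintro ⟨hx, h | h⟩
          · exact h
          · have := hB h
            simp only [Finset.mem_sdiff, Finset.mem_union] at this
            exact absurd (Or.inr hx) this.2
        · intro h; exact ⟨hA h, Or.inl h⟩
      rw [this, hAc]
  · -- left inverse
    intro T hT
    simp only [Finset.mem_filter, Finset.mem_powersetCard] at hT
    obtain ⟨-, h0, -⟩ := hT
    ext x
    simp only [Finset.mem_union, Finset.mem_inter, Finset.mem_sdiff, Finset.mem_union]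
    constructor
    · rintro (⟨-, h⟩ | ⟨h, -⟩) <;> exact h
    · intro hx
      by_cases h1 : x ∈ S₁
      · exact Or.inl ⟨h1, hx⟩
      · exact Or.inr ⟨hx, fun h => h.elim (fun h' => (h0 x h') hx) h1⟩
  · -- right inverse
    intro q hq
    simp only [Finset.mem_product, Finset.mem_powersetCard] at hq
    obtain ⟨⟨hA, -⟩, hB, -⟩ := hq
    have h1 : S₁ ∩ (q.1 ∪ q.2) = q.1 := by
      ext x
      simp only [Finset.mem_inter, Finset.mem_union]
      constructor
      · rintro ⟨hx, h | h⟩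
        · exact h
        · have := hB h
          simp only [Finset.mem_sdiff, Finset.mem_union] at this
          exact absurd (Or.inr hx) this.2
      · intro h; exact ⟨hA h, Or.inl h⟩
    have h2 : (q.1 ∪ q.2) \ (S₀ ∪ S₁) = q.2 := by
      ext x
      simp only [Finset.mem_sdiff, Finset.mem_union]
      constructor
      · rintro ⟨h | h, hx⟩
        · exact absurd (Or.inr (hA h)) hx
        · exact h
      · intro h
        have := hB h
        simp only [Finset.mem_sdiff, Finset.mem_union] at this
        exact ⟨Or.inr h, this.2⟩
    rw [h1, h2]

lemma desc_cast {n k : ℕ} (h : k ≤ n) :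
    (n.descFactorial k : ℝ) = (n ! : ℝ) / ((n - k)! : ℝ) := by
  rw [eq_div_iff (by positivity), ← Nat.cast_mul, mul_comm,
    Nat.factorial_mul_descFactorial h]

lemma choose_desc_identity (t a r b : ℕ) :
    ((t+a+r+b).choose (t+a) : ℝ) * (t+a).descFactorial t * (r+b).descFactorial r
      = ((a+b).choose a : ℝ) * (t+a+r+b).descFactorial (t+r) := by
  have c1 : ((t+a+r+b).choose (t+a) : ℝ) = ((t+a+r+b)! : ℝ) / (((t+a)! : ℝ) * ((r+b)! : ℝ)) := by
    rw [Nat.cast_choose ℝ (by omega), show t+a+r+b-(t+a) = r+b from by omega]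
  have c2 : ((a+b).choose a : ℝ) = ((a+b)! : ℝ) / ((a ! : ℝ) * (b ! : ℝ)) := by
    rw [Nat.cast_choose ℝ (by omega), show a+b-a = b from by omega]
  have d1 : ((t+a).descFactorial t : ℝ) = ((t+a)! : ℝ) / (a ! : ℝ) := by
    rw [desc_cast (by omega), show t+a-t = a from by omega]
  have d2 : ((r+b).descFactorial r : ℝ) = ((r+b)! : ℝ) / (b ! : ℝ) := by
    rw [desc_cast (by omega), show r+b-r = b from by omega]
  have d3 : ((t+a+r+b).descFactorial (t+r) : ℝ) = ((t+a+r+b)! : ℝ) / ((a+b)! : ℝ) := by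
    rw [desc_cast (by omega), show t+a+r+b-(t+r) = a+b from by omega]
  rw [c1, c2, d1, d2, d3]
  have h1 : ((t+a)! : ℝ) ≠ 0 := by positivity
  have h2 : ((r+b)! : ℝ) ≠ 0 := by positivity
  have h3 : ((a+b)! : ℝ) ≠ 0 := by positivity
  have h4 : (a ! : ℝ) ≠ 0 := by positivity
  have h5 : (b ! : ℝ) ≠ 0 := by positivity
  field_simp






lemma desc_cast' {n k : ℕ} (h : k ≤ n) :
    (n.descFactorial k : ℝ) = (n ! : ℝ) / ((n - k)! : ℝ) := by
  rw [eq_div_iff (by positivity), ← Nat.cast_mul, mul_comm,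
    Nat.factorial_mul_descFactorial h]

lemma inv_one_sub_le_exp {x : ℝ} (h0 : 0 ≤ x) (h6 : x ≤ 1/6) :
    (1 - x)⁻¹ ≤ Real.exp (x + 0.6 * x^2) := by
  have h1 : (0:ℝ) < 1 - x := by linarith
  have h2 : 1 + x + x^2/2 ≤ Real.exp x := Real.quadratic_le_exp_of_nonneg h0
  have h3 : 1 + 0.6*x^2 ≤ Real.exp (0.6*x^2) := by
    have := Real.add_one_le_exp (0.6*x^2); linarith
  rw [Real.exp_add]
  have hx36 : x^2 ≤ (1/6) * x := by nlinarith
  have e3 : x^3 ≤ (1/6) * x^2 := by nlinarith [sq_nonneg x]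
  have e4 : x^4 ≤ (1/6) * x^3 := by nlinarith [mul_nonneg (mul_nonneg h0 h0) h0]
  have e5 : x^5 ≤ (1/6) * x^4 := by nlinarith [mul_nonneg (mul_nonneg (mul_nonneg h0 h0) h0) h0]
  have key : 1 ≤ (1 - x) * ((1 + x + x^2/2) * (1 + 0.6*x^2)) := by nlinarith [sq_nonneg x]
  rw [inv_le_iff_one_le_mul₀' h1]
  calc (1:ℝ) ≤ (1 - x) * ((1 + x + x^2/2) * (1 + 0.6*x^2)) := key
    _ ≤ (1 - x) * (Real.exp x * Real.exp (0.6*x^2)) := by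
        apply mul_le_mul_of_nonneg_left _ h1.le
        apply mul_le_mul h2 h3 (by nlinarith) (Real.exp_nonneg _)

lemma exp_075_le : Real.exp (3/4 : ℝ) ≤ 2.2 := by
  have h4 : (Real.exp (3/4 : ℝ))^4 = Real.exp 3 := by
    rw [← Real.exp_nat_mul]; norm_num
  have h3 : Real.exp 3 ≤ 2.2^4 := by
    have h1 : Real.exp 1 ≤ 2.7182818286 := Real.exp_one_lt_d9.le
    have : Real.exp 3 = (Real.exp 1)^3 := by rw [← Real.exp_nat_mul]; norm_num
    rw [this]
    calc (Real.exp 1)^3 ≤ 2.7182818286^3 := by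
          apply pow_le_pow_left₀ (Real.exp_nonneg 1) h1
      _ ≤ 2.2^4 := by norm_num
  have := h4 ▸ h3
  exact le_of_pow_le_pow_left₀ (by norm_num) (by norm_num) this



set_option maxHeartbeats 1000000 in
lemma expo_bound (c rk nR mR kR sR tR stR d x : ℝ)
    (hc : 0 < c) (hk1 : 1 ≤ kR) (hrk0 : 0 < rk) (hrksq : rk*rk = kR) (hrk66 : 6.6 ≤ rk)
    (hcrk : 200 ≤ c*rk) (hn_lb : c*kR^3 ≤ nR) (hn200 : 200*kR^2 ≤ nR)
    (hm_lb : nR/rk ≤ mR) (hm_ub : mR ≤ nR/rk + 1)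
    (hd : d = 1/(100*kR)) (hx : x = 1/rk + (kR+1)/nR)
    (ht0 : 0 ≤ tR) (htk : tR ≤ kR) (hst0 : 0 ≤ stR) (hstk : stR ≤ kR)
    (hsts : stR ≤ sR) (hsk : sR ≤ kR) :
    (nR ≤ (mR - kR) * (rk * Real.exp d)) ∧
    (nR ≤ (nR - mR - kR) * Real.exp (x + 0.6*x^2)) ∧
    (tR * d + stR * (x + 0.6*x^2) ≤ sR/rk + 3/4) ∧ (0 ≤ x) ∧ (0 < d) := by
  have hrk1 : 1 ≤ rk := by nlinarith
  have hk0 : (0:ℝ) < kR := by linarith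
  have hd0 : 0 < d := by rw [hd]; positivity
  have hdk : d * (100*kR) = 1 := by rw [hd]; field_simp
  have hnbig : 200 * (kR^2 * rk) ≤ nR := by
    have hkey3 : c * kR^3 = (c*rk) * (kR^2 * rk) := by
      have h9 : kR^3 = kR^2 * (rk * rk) := by rw [hrksq]; ring
      rw [h9]; ring
    calc 200 * (kR^2*rk) ≤ (c*rk) * (kR^2*rk) :=
          mul_le_mul_of_nonneg_right hcrk (by positivity)
      _ = c * kR^3 := hkey3.symm
      _ ≤ nR := hn_lb
  have hn0 : (0:ℝ) < nR := by nlinarith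
  have hnm : nR ≤ mR * rk := by
    have := mul_le_mul_of_nonneg_right hm_lb hrk0.le
    rwa [div_mul_cancel₀ _ hrk0.ne'] at this
  have hs0 : 0 ≤ sR := le_trans hst0 hsts
  -- u bound
  have hu : nR ≤ (mR - kR) * (rk * Real.exp d) := by
    have hde : 1 + d ≤ Real.exp d := by
      have := Real.add_one_le_exp d; linarith
    have h1 : nR - kR*rk ≤ (mR - kR) * rk := by nlinarith
    have h2 : 2 * (kR*rk) ≤ nR * d := by
      have h3 := mul_le_mul_of_nonneg_right hnbig hd0.le
      nlinarith [mul_pos hk0 hrk0]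
    have h3 : nR ≤ (mR - kR) * (rk * (1+d)) := by
      nlinarith [mul_le_mul_of_nonneg_right h1 (show (0:ℝ) ≤ 1 + d by linarith),
        mul_pos hk0 hrk0, hd0]
    calc nR ≤ (mR - kR) * (rk * (1+d)) := h3
      _ ≤ (mR - kR) * (rk * Real.exp d) := by
          have hmk0 : 0 ≤ mR - kR := by nlinarith [mul_pos hk0 hrk0]
          exact mul_le_mul_of_nonneg_left
            (mul_le_mul_of_nonneg_left hde hrk0.le) hmk0
  -- x facts
  have hx0 : 0 ≤ x := by rw [hx]; positivity
  have hxrk : x * rk ≤ 1.01 := by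
    have h1 : ((kR+1)/nR) * rk ≤ 0.01 := by
      rw [div_mul_eq_mul_div, div_le_iff₀ hn0]
      nlinarith [mul_pos (mul_pos hk0 hk0) hrk0]
    have h2 : (1/rk) * rk = 1 := by field_simp
    rw [hx, add_mul]; linarith
  have hx6 : x ≤ 1/6 := by
    nlinarith [mul_le_mul_of_nonneg_right hx0 hrk0.le]
  have hx1 : (0:ℝ) < 1 - x := by linarith
  -- v bound
  have hv : nR ≤ (nR - mR - kR) * Real.exp (x + 0.6*x^2) := by
    have hnx : nR*x = nR/rk + (kR+1) := by
      rw [hx]; field_simp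
    have hQlb : nR*(1-x) ≤ nR - mR - kR := by nlinarith
    have hinv := inv_one_sub_le_exp hx0 hx6
    calc nR = (nR*(1-x)) * (1-x)⁻¹ := by field_simp
      _ ≤ (nR - mR - kR) * Real.exp (x + 0.6*x^2) :=
          mul_le_mul hQlb hinv (by positivity) (by nlinarith)
  -- exponent bound
  have hsx : sR * x ≤ sR/rk + 0.01 := by
    have h1 : sR * ((kR+1)/nR) ≤ 0.01 := by
      rw [mul_div_assoc']
      rw [div_le_iff₀ hn0]
      nlinarith [mul_le_mul_of_nonneg_right hsk
        (show (0:ℝ) ≤ kR+1 by positivity), mul_pos hk0 hk0]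
    have h2 : sR * (1/rk) = sR/rk := by rw [mul_one_div]
    rw [hx, mul_add]
    linarith
  have hx2k : kR * (x*x) ≤ 1.0201 := by
    nlinarith [hxrk, mul_le_mul hxrk hxrk (by positivity) (by norm_num)]
  have hexpo : tR * d + stR * (x + 0.6*x^2) ≤ sR/rk + 3/4 := by
    have h1 : tR * d ≤ 0.01 := by
      have : tR * d ≤ kR * d := mul_le_mul_of_nonneg_right htk hd0.le
      nlinarith [hdk]
    have h2 : stR * x ≤ sR * x := mul_le_mul_of_nonneg_right hsts hx0
    have h3 : stR * (0.6*x^2) ≤ kR * (0.6*x^2) :=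
      mul_le_mul_of_nonneg_right hstk (by positivity)
    have h4 : kR * (0.6*x^2) ≤ 0.61206 := by nlinarith [hx2k]
    nlinarith [hsx]
  exact ⟨hu, hv, hexpo, hx0, hd0⟩

lemma final_numeric (c kR L : ℝ) (hc : 0 < c) (hk1 : 1 ≤ kR) (hL0 : 0 ≤ L)
    (hL : L ≤ Real.log 2 + Real.log c + 3 * Real.log kR)
    (hlgk : 4.4 + 2.2*Real.log 2 - 5.8*Real.log c ≤ 1.4 * Real.log kR) :
    (kR * L + 2) * Real.exp (3/4 : ℝ) ≤ 8 * kR * (Real.log c + Real.log kR) := by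
  have he := exp_075_le
  have he0 : (0:ℝ) ≤ Real.exp (3/4:ℝ) := Real.exp_nonneg _
  have hkL : 0 ≤ kR * L := by positivity
  have h1 : (kR * L + 2) * Real.exp (3/4:ℝ) ≤ (kR * L + 2) * 2.2 :=
    mul_le_mul_of_nonneg_left he (by linarith)
  have h2 : kR * L ≤ kR * (Real.log 2 + Real.log c + 3 * Real.log kR) :=
    mul_le_mul_of_nonneg_left hL (by linarith)
  have h3 : kR * (4.4 + 2.2*Real.log 2 - 5.8*Real.log c) ≤ kR * (1.4 * Real.log kR) :=
    mul_le_mul_of_nonneg_left hlgk (by linarith)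
  nlinarith [h1, h2, h3]


end Helpers

section Main
open Nat

set_option maxHeartbeats 1000000 in
/-- For every `c > 0` there is `K` such that for all `k ≥ K`, `k₀ + k₁ ≤ k`,
`0 ≤ β ≤ 1` and `n = ⌈c·k³⌉`, there is an `(n,k₀,k₁,1/√k,β)`-mapping family of size
at most `8·binom(k₁,⌈β·k₁⌉)⁻¹·(√k)^{⌈β·k₁⌉}·e^{(k₀+k₁)/√k}·k·ln(c·k)`. -/
theorem mapping_family_small_universe (c : ℝ) (hc : 0 < c) :
    ∃ K : ℕ, ∀ k : ℕ, K ≤ k → ∀ k₀ k₁ : ℕ, k₀ + k₁ ≤ k →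
      ∀ β : ℝ, 0 ≤ β → β ≤ 1 →
      ∃ F : Finset (Fin ⌈c * (k : ℝ) ^ 3⌉₊ → Fin 2),
        IsMappingFamily ⌈c * (k : ℝ) ^ 3⌉₊ k₀ k₁ (1 / Real.sqrt k) β F ∧
          (F.card : ℝ) ≤
            8 * ((k₁.choose ⌈β * (k₁ : ℝ)⌉₊ : ℝ))⁻¹ *
              Real.sqrt k ^ ⌈β * (k₁ : ℝ)⌉₊ *
              Real.exp (((k₀ : ℝ) + (k₁ : ℝ)) / Real.sqrt k) *
              (k : ℝ) * Real.log (c * (k : ℝ)) := by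
  set A : ℝ := (4.4 + 2.2*Real.log 2 - 5.8*Real.log c)/1.4 with hA
  refine ⟨max (max (⌈(200/c)^2⌉₊ + 1) 44) (⌈Real.exp A⌉₊ + 1), ?_⟩
  intro k hK k₀ k₁ hk01 β hβ0 hβ1
  -- basic facts about k
  have hk44 : 44 ≤ k := le_trans (le_max_of_le_left (le_max_right _ _)) hK
  have hk1 : (1:ℝ) ≤ k := by exact_mod_cast Nat.one_le_iff_ne_zero.2 (by omega)
  have hkpos : (0:ℝ) < k := by linarith
  set rk : ℝ := Real.sqrt k with hrk
  have hrk0 : 0 < rk := Real.sqrt_pos.2 hkpos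
  have hrksq : rk * rk = k := Real.mul_self_sqrt hkpos.le
  have hrk1 : 1 ≤ rk := by nlinarith
  have hrk66 : 6.6 ≤ rk := by
    nlinarith [show (44:ℝ) ≤ k by exact_mod_cast hk44]
  have hkrk : rk ≤ k := by nlinarith
  have hcrk : 200 ≤ c * rk := by
    have h1 : (⌈(200/c)^2⌉₊ + 1 : ℕ) ≤ k := le_trans (le_max_of_le_left (le_max_left _ _)) hK
    have h2 : ((200/c)^2 : ℝ) ≤ k := by
      calc ((200/c)^2 : ℝ) ≤ (⌈(200/c)^2⌉₊ : ℝ) := Nat.le_ceil _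
        _ ≤ k := by exact_mod_cast Nat.le_of_succ_le h1
    have h3 : 200/c ≤ rk := by
      have : (0:ℝ) ≤ 200/c := by positivity
      nlinarith [Real.sq_sqrt hkpos.le, Real.sqrt_nonneg (k:ℝ)]
    calc (200:ℝ) = c * (200/c) := by field_simp
      _ ≤ c * rk := by apply mul_le_mul_of_nonneg_left h3 hc.le
  have hck200 : 200 ≤ c * k := by nlinarith
  have hlogk : A ≤ Real.log k := by
    have h1 : (⌈Real.exp A⌉₊ + 1 : ℕ) ≤ k := le_trans (le_max_right _ _) hK
    have h2 : Real.exp A ≤ k := by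
      calc Real.exp A ≤ (⌈Real.exp A⌉₊ : ℝ) := Nat.le_ceil _
        _ ≤ k := by exact_mod_cast Nat.le_of_succ_le h1
    calc A = Real.log (Real.exp A) := (Real.log_exp A).symm
      _ ≤ Real.log k := Real.log_le_log (Real.exp_pos A) h2
  -- n, m, t, s
  set n : ℕ := ⌈c * (k : ℝ) ^ 3⌉₊ with hn
  have hn_lb : c * (k:ℝ)^3 ≤ n := Nat.le_ceil _
  have hck3 : 200 ≤ c * (k:ℝ)^3 := by
    nlinarith [mul_le_mul_of_nonneg_left (show (1:ℝ) ≤ (k:ℝ)^2 by nlinarith)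
      (show (0:ℝ) ≤ c*k by positivity)]
  have hn_ub2 : (n:ℝ) ≤ 2 * c * (k:ℝ)^3 := by
    have h1 : (n:ℝ) < c * (k:ℝ)^3 + 1 := Nat.ceil_lt_add_one (by positivity)
    nlinarith
  have hn_pos : 0 < n := by
    have : (0:ℝ) < n := by nlinarith
    exact_mod_cast this
  set m : ℕ := ⌈1 / rk * (n:ℝ)⌉₊ with hm
  have hm_lb : (n:ℝ)/rk ≤ m := by
    have := Nat.le_ceil (1 / rk * (n:ℝ))
    calc (n:ℝ)/rk = 1/rk * n := by ring
      _ ≤ m := this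
  have hm_ub : (m:ℝ) ≤ (n:ℝ)/rk + 1 := by
    have := Nat.ceil_lt_add_one (show (0:ℝ) ≤ 1/rk * n by positivity)
    calc (m:ℝ) ≤ 1/rk * n + 1 := this.le
      _ = n/rk + 1 := by ring
  set t : ℕ := ⌈β * (k₁ : ℝ)⌉₊ with ht
  set s : ℕ := k₀ + k₁ with hs
  have hts : t ≤ k₁ := by
    rw [ht]
    exact Nat.ceil_le.2 (by nlinarith [Nat.cast_nonneg (α := ℝ) k₁])
  have htk : t ≤ k := by omega
  have hsk : s ≤ k := hk01
  have hsreal : ((k₀ : ℝ) + (k₁ : ℝ)) = (s:ℝ) := by push_cast [hs]; ring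
  -- size comparisons
  have hnk3 : 200 * (k:ℝ)^2 ≤ c * (k:ℝ)^3 := by nlinarith
  have hid : c*(k:ℝ)^3/rk = c*(k:ℝ)^2*rk := by
    rw [div_eq_iff hrk0.ne']
    calc c*(k:ℝ)^3 = c*(k:ℝ)^2*(rk*rk) := by rw [hrksq]; ring
      _ = c*(k:ℝ)^2*rk*rk := by ring
  have hckrk : 200 * (k:ℝ)^2 ≤ c * (k:ℝ)^2 * rk := by
    nlinarith [mul_le_mul_of_nonneg_left hcrk (sq_nonneg (k:ℝ))]
  have hmk : 2 * (k:ℝ) ≤ m := by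
    have h2 : c*(k:ℝ)^3/rk ≤ (n:ℝ)/rk := by gcongr
    rw [hid] at h2
    have hk2k : (k:ℝ) ≤ (k:ℝ)^2 := by nlinarith
    linarith [hm_lb]
  have h166 : 6.6 * ((n:ℝ)/rk) ≤ n := by
    have h1 : 6.6 * ((n:ℝ)/rk) ≤ rk * ((n:ℝ)/rk) :=
      mul_le_mul_of_nonneg_right hrk66 (by positivity)
    rwa [mul_div_cancel₀ _ hrk0.ne'] at h1
  have hn200 : 200*(k:ℝ)^2 ≤ n := le_trans hnk3 hn_lb
  have hQpos : (k:ℝ) + 1 ≤ (n:ℝ) - m - k := by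
    have hk2k : (k:ℝ) ≤ (k:ℝ)^2 := by nlinarith
    nlinarith [hm_ub, h166, hn200, hm_lb, Nat.cast_nonneg (α := ℝ) n]
  have hmn : m + k ≤ n := by
    have : ((m + k : ℕ) : ℝ) ≤ (n:ℝ) := by push_cast; linarith
    exact_mod_cast this
  have hmnnat : m ≤ n := by omega
  have htm : t ≤ m := by
    have : (k:ℝ) ≤ m := by linarith
    have : k ≤ m := by exact_mod_cast this
    omega
  have hmtns : m - t ≤ n - s := by omega
  -- probability space
  set Ω : Finset (Finset (Fin n)) := Finset.univ.powersetCard m with hΩ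
  have hΩcard : Ω.card = n.choose m := by
    rw [hΩ, Finset.card_powersetCard, Finset.card_univ, Fintype.card_fin]
  have hchoose_pos : 0 < n.choose m := Nat.choose_pos hmnnat
  have hΩne : Ω.Nonempty := Finset.card_pos.1 (by rw [hΩcard]; exact hchoose_pos)
  set R : Finset (Fin n) × Finset (Fin n) → Finset (Fin n) → Prop :=
    fun q T => (∀ x ∈ q.1, x ∉ T) ∧ (q.2 ∩ T).card = t with hR
  set P : Finset (Finset (Fin n) × Finset (Fin n)) :=
    (Finset.univ.powersetCard k₀ ×ˢ Finset.univ.powersetCard k₁).filter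
      (fun q => Disjoint q.1 q.2) with hP
  set Cnum : ℕ := k₁.choose t * (n - s).choose (m - t) with hCnum
  have hcount : ∀ q ∈ P, (Ω.filter (R q)).card = Cnum := by
    intro q hq
    rw [hP, Finset.mem_filter, Finset.mem_product, Finset.mem_powersetCard,
      Finset.mem_powersetCard] at hq
    obtain ⟨⟨⟨-, h0⟩, -, h1⟩, hdq⟩ := hq
    have hcl := count_lemma q.1 q.2 hdq m t htm
    rw [h0, h1] at hcl
    exact hcl
  -- the indicator map
  set ind : Finset (Fin n) → (Fin n → Fin 2) := fun T x => if x ∈ T then 1 else 0 with hind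
  have hind1 : ∀ T : Finset (Fin n), ∀ x, ind T x = 1 ↔ x ∈ T := by
    intro T x
    rw [hind]
    by_cases hx : x ∈ T <;> simp [hx]
  -- RHS nonneg pieces
  have hlogck : 0 ≤ Real.log (c * k) := Real.log_nonneg (by linarith)
  have hCpos : 0 < (k₁.choose t : ℝ) := by exact_mod_cast Nat.choose_pos hts
  rcases P.eq_empty_or_nonempty with hPe | hPne
  · -- no valid pairs at all: empty family works
    refine ⟨∅, ⟨by simp, ?_⟩, ?_⟩
    · intro S₀ S₁ hd h0 h1
      exfalso
      have : (S₀, S₁) ∈ P := by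
        rw [hP, Finset.mem_filter, Finset.mem_product, Finset.mem_powersetCard,
          Finset.mem_powersetCard]
        exact ⟨⟨⟨Finset.subset_univ _, h0⟩, Finset.subset_univ _, h1⟩, hd⟩
      rw [hPe] at this
      exact absurd this (Finset.notMem_empty _)
    · simp only [Finset.card_empty, Nat.cast_zero]
      positivity
  · -- main case
    have hCnum_pos : 0 < Cnum := by
      rw [hCnum]
      exact Nat.mul_pos (Nat.choose_pos hts) (Nat.choose_pos hmtns)
    set pp : ℝ := (Cnum : ℝ) / (n.choose m : ℝ) with hpp
    have hp_pos : 0 < pp := by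
      apply _root_.div_pos _ _
      · exact_mod_cast hCnum_pos
      · exact_mod_cast hchoose_pos
    have hCnum_le : Cnum ≤ n.choose m := by
      obtain ⟨q, hq⟩ := hPne
      calc Cnum = (Ω.filter (R q)).card := (hcount q hq).symm
        _ ≤ Ω.card := Finset.card_filter_le _ _
        _ = n.choose m := hΩcard
    have hp_le1 : pp ≤ 1 := by
      rw [hpp, div_le_one (by exact_mod_cast hchoose_pos)]
      exact_mod_cast hCnum_le
    have hcov : ∀ q ∈ P, pp * Ω.card ≤ ((Ω.filter (R q)).card : ℝ) := by
      intro q hq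
      rw [hcount q hq, hΩcard, hpp, div_mul_cancel₀]
      exact_mod_cast hchoose_pos.ne'
    have hn1R : (1:ℝ) ≤ n := by exact_mod_cast hn_pos
    have hlogn : 0 ≤ Real.log n := Real.log_nonneg hn1R
    set N : ℕ := ⌈((k:ℝ) * Real.log n + 1) / pp⌉₊ with hN
    have hPcard : (P.card : ℝ) ≤ (n:ℝ)^k := by
      have h1 : P.card ≤ n.choose k₀ * n.choose k₁ := by
        calc P.card ≤ ((Finset.univ.powersetCard k₀ (α := Fin n)) ×ˢ
              Finset.univ.powersetCard k₁).card := Finset.card_filter_le _ _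
          _ = n.choose k₀ * n.choose k₁ := by
              rw [Finset.card_product, Finset.card_powersetCard, Finset.card_powersetCard,
                Finset.card_univ, Fintype.card_fin]
      have h2 : n.choose k₀ * n.choose k₁ ≤ n^k := by
        calc n.choose k₀ * n.choose k₁ ≤ n^k₀ * n^k₁ :=
              Nat.mul_le_mul (Nat.choose_le_pow _ _) (Nat.choose_le_pow _ _)
          _ = n^(k₀+k₁) := (pow_add n k₀ k₁).symm
          _ ≤ n^k := Nat.pow_le_pow_right hn_pos hk01
      exact_mod_cast le_trans h1 h2
    have hNbound : (1 - pp)^N * P.card < 1 := by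
      have h1p : (0:ℝ) ≤ 1 - pp := by linarith
      have hexp : 1 - pp ≤ Real.exp (-pp) := by
        have := Real.add_one_le_exp (-pp); linarith
      have hNp : (k:ℝ) * Real.log n + 1 ≤ pp * N := by
        have h1 : ((k:ℝ) * Real.log n + 1) / pp ≤ N := Nat.le_ceil _
        calc (k:ℝ) * Real.log n + 1 = pp * (((k:ℝ) * Real.log n + 1) / pp) := by
              field_simp
          _ ≤ pp * N := by
              apply mul_le_mul_of_nonneg_left h1 hp_pos.le
      calc (1 - pp)^N * P.card ≤ Real.exp (-pp)^N * (n:ℝ)^k := by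
            apply mul_le_mul (pow_le_pow_left₀ h1p hexp N) hPcard (Nat.cast_nonneg _)
              (pow_nonneg (Real.exp_nonneg _) _)
        _ = Real.exp (-(pp * N)) * Real.exp ((k:ℝ) * Real.log n) := by
            have e1 : Real.exp (-pp)^N = Real.exp (-(pp*(N:ℝ))) := by
              rw [← Real.exp_nat_mul]; congr 1; push_cast; ring
            have e2 : ((n:ℝ))^k = Real.exp ((k:ℝ) * Real.log n) := by
              rw [Real.exp_nat_mul, Real.exp_log (by exact_mod_cast hn_pos)]
            rw [e1, e2]
        _ = Real.exp ((k:ℝ) * Real.log n - pp * N) := by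
            rw [← Real.exp_add]; ring_nf
        _ ≤ Real.exp (-1) := by
            apply Real.exp_le_exp.2; linarith
        _ < 1 := by
            rw [Real.exp_lt_one_iff]; norm_num
    obtain ⟨Fs, hFsub, hFcard, hFcov⟩ :=
      cover_lemma Ω R pp hp_pos hp_le1 hΩne N P hcov hNbound
    refine ⟨Fs.image ind, ⟨?_, ?_⟩, ?_⟩
    · -- every member has exactly m ones
      intro f hf
      obtain ⟨T, hT, rfl⟩ := Finset.mem_image.1 hf
      have hTΩ := hFsub hT
      rw [hΩ, Finset.mem_powersetCard] at hTΩ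
      have : (Finset.univ.filter fun x => ind T x = 1) = T := by
        ext x
        simp only [Finset.mem_filter, Finset.mem_univ, true_and, hind1]
      rw [this, hTΩ.2]
    · -- covering property
      intro S₀ S₁ hd h0 h1
      have hqP : (S₀, S₁) ∈ P := by
        rw [hP, Finset.mem_filter, Finset.mem_product, Finset.mem_powersetCard,
          Finset.mem_powersetCard]
        exact ⟨⟨⟨Finset.subset_univ _, h0⟩, Finset.subset_univ _, h1⟩, hd⟩
      obtain ⟨T, hTF, hRT⟩ := hFcov _ hqP
      refine ⟨ind T, Finset.mem_image_of_mem _ hTF, ?_, ?_⟩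
      · intro x hx
        have : x ∉ T := hRT.1 x hx
        rw [hind]
        simp [this]
      · have : (S₁.filter fun x => ind T x = 1) = S₁ ∩ T := by
          ext x
          simp only [Finset.mem_filter, Finset.mem_inter, hind1]
        rw [this, hRT.2]
    · -- cardinality bound
      have hFN : ((Fs.image ind).card : ℝ) ≤ N := by
        exact_mod_cast le_trans (Finset.card_image_le) hFcard
      have hNle : (N:ℝ) ≤ ((k:ℝ) * Real.log n + 2) / pp := by
        have h1 : (N:ℝ) ≤ ((k:ℝ) * Real.log n + 1) / pp + 1 := by
          rw [hN]
          exact (Nat.ceil_lt_add_one (by positivity)).le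
        have h2 : (1:ℝ) ≤ 1/pp := by
          rw [le_div_iff₀ hp_pos]; linarith
        calc (N:ℝ) ≤ ((k:ℝ) * Real.log n + 1) / pp + 1 := h1
          _ ≤ ((k:ℝ) * Real.log n + 1) / pp + 1/pp := by linarith
          _ = ((k:ℝ) * Real.log n + 2) / pp := by ring
      -- real quantities
      set Mv : ℝ := (m:ℝ) - k with hMv
      set Qv : ℝ := (n:ℝ) - m - k with hQv
      have hMv1 : (1:ℝ) ≤ Mv := by rw [hMv]; linarith
      have hQv1 : (1:ℝ) ≤ Qv := by rw [hQv]; linarith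
      set d : ℝ := 1/(100*(k:ℝ)) with hd
      set x : ℝ := 1/rk + ((k:ℝ)+1)/n with hx
      have hst_le : ((s-t : ℕ):ℝ) ≤ (s:ℝ) := by
        have : s - t ≤ s := by omega
        exact_mod_cast this
      have hst_lek : ((s-t : ℕ):ℝ) ≤ (k:ℝ) := by
        have : s - t ≤ k := by omega
        exact_mod_cast this
      have hsleK : (s:ℝ) ≤ (k:ℝ) := by exact_mod_cast hsk
      have htleK : (t:ℝ) ≤ (k:ℝ) := by exact_mod_cast htk
      obtain ⟨hu, hv, hexpo, hx0, hd0⟩ :=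
        expo_bound c rk (n:ℝ) (m:ℝ) (k:ℝ) (s:ℝ) (t:ℝ) ((s-t:ℕ):ℝ) d x
          hc hk1 hrk0 hrksq hrk66 hcrk hn_lb hn200 hm_lb hm_ub hd hx
          (Nat.cast_nonneg t) htleK (Nat.cast_nonneg _) hst_lek hst_le hsleK
      rw [← hMv] at hu
      rw [← hQv] at hv
      -- descFactorial quantities
      set Dm : ℝ := (m.descFactorial t : ℝ) with hDm
      set Dn : ℝ := ((n-m).descFactorial (s-t) : ℝ) with hDn
      set Ds : ℝ := (n.descFactorial s : ℝ) with hDs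
      set Ch : ℝ := ((n-s).choose (m-t) : ℝ) with hCh
      set CM : ℝ := (n.choose m : ℝ) with hCM
      have hDmb : Mv^t ≤ Dm := by
        have h1 : ((m+1-t : ℕ) : ℝ)^t ≤ Dm := by
          rw [hDm]; exact_mod_cast Nat.pow_sub_le_descFactorial m t
        have h2 : Mv ≤ ((m+1-t:ℕ):ℝ) := by
          rw [hMv, Nat.cast_sub (by omega)]
          push_cast
          linarith
        calc Mv^t ≤ ((m+1-t:ℕ):ℝ)^t := pow_le_pow_left₀ (by linarith) h2 t
          _ ≤ Dm := h1
      have hDnb : Qv^(s-t) ≤ Dn := by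
        have h1 : (((n-m)+1-(s-t) : ℕ) : ℝ)^(s-t) ≤ Dn := by
          rw [hDn]; exact_mod_cast Nat.pow_sub_le_descFactorial (n-m) (s-t)
        have h2 : Qv ≤ (((n-m)+1-(s-t):ℕ):ℝ) := by
          have e : (((n-m)+1-(s-t):ℕ):ℝ) = ((n:ℝ) - m) + 1 - ((s-t:ℕ):ℝ) := by
            rw [Nat.cast_sub (by omega), Nat.cast_add, Nat.cast_sub hmnnat]
            push_cast; ring
          rw [hQv, e]
          linarith
        calc Qv^(s-t) ≤ (((n-m)+1-(s-t):ℕ):ℝ)^(s-t) := pow_le_pow_left₀ (by linarith) h2 _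
          _ ≤ Dn := h1
      have hDm0 : 0 < Dm := lt_of_lt_of_le (by positivity) hDmb
      have hDn0 : 0 < Dn := lt_of_lt_of_le (by positivity) hDnb
      -- the identity
      have hiden : CM * Dm * Dn = Ch * Ds := by
        have hD := choose_desc_identity t (m-t) (s-t) ((n-m)-(s-t))
        rw [show t+(m-t) = m by omega] at hD
        rw [show m+(s-t)+((n-m)-(s-t)) = n by omega] at hD
        rw [show (s-t)+((n-m)-(s-t)) = n-m by omega] at hD
        rw [show (m-t)+((n-m)-(s-t)) = n-s by omega] at hD
        rw [show t+(s-t) = s by omega] at hD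
        rw [hCM, hDm, hDn, hCh, hDs]
        exact hD
      set B0 : ℝ := rk^t * Real.exp ((s:ℝ)/rk + 3/4) with hB0
      -- main descFactorial bound
      have hDsB : Ds ≤ Dm * Dn * B0 := by
        have h1 : Ds ≤ (n:ℝ)^s := by
          rw [hDs]; exact_mod_cast Nat.descFactorial_le_pow n s
        have h2 : (n:ℝ)^s = (n:ℝ)^t * (n:ℝ)^(s-t) := by
          rw [← pow_add]; congr 1; omega
        have h3 : (n:ℝ)^t ≤ Mv^t * (rk * Real.exp d)^t := by
          rw [← mul_pow]
          exact pow_le_pow_left₀ (Nat.cast_nonneg n) hu t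
        have h4 : (n:ℝ)^(s-t) ≤ Qv^(s-t) * Real.exp (x+0.6*x^2)^(s-t) := by
          rw [← mul_pow]
          exact pow_le_pow_left₀ (Nat.cast_nonneg n) hv _
        have h5 : (rk * Real.exp d)^t = rk^t * Real.exp ((t:ℝ)*d) := by
          rw [mul_pow, ← Real.exp_nat_mul]
        have h6 : Real.exp (x+0.6*x^2)^(s-t) = Real.exp (((s-t:ℕ):ℝ) * (x+0.6*x^2)) := by
          rw [← Real.exp_nat_mul]
        calc Ds ≤ (n:ℝ)^t * (n:ℝ)^(s-t) := by rw [← h2]; exact h1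
          _ ≤ (Mv^t * (rk * Real.exp d)^t) * (Qv^(s-t) * Real.exp (x+0.6*x^2)^(s-t)) := by
              apply mul_le_mul h3 h4 (by positivity) (by positivity)
          _ = Mv^t * Qv^(s-t) *
              (rk^t * (Real.exp ((t:ℝ)*d) * Real.exp (((s-t:ℕ):ℝ) * (x+0.6*x^2)))) := by
              rw [h5, h6]; ring
          _ ≤ Dm * Dn * B0 := by
              rw [hB0]
              have he : Real.exp ((t:ℝ)*d) * Real.exp (((s-t:ℕ):ℝ) * (x+0.6*x^2))
                  ≤ Real.exp ((s:ℝ)/rk + 3/4) := by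
                rw [← Real.exp_add]
                exact Real.exp_le_exp.2 hexpo
              have hMQ : Mv^t * Qv^(s-t) ≤ Dm * Dn :=
                mul_le_mul hDmb hDnb (by positivity) hDm0.le
              have hB0' : rk^t * (Real.exp ((t:ℝ)*d) * Real.exp (((s-t:ℕ):ℝ) * (x+0.6*x^2)))
                  ≤ rk^t * Real.exp ((s:ℝ)/rk + 3/4) :=
                mul_le_mul_of_nonneg_left he (by positivity)
              apply mul_le_mul hMQ hB0' (by positivity) (by positivity)
      -- invert to get bound on 1/pp
      have hCh0 : 0 < Ch := by
        rw [hCh]; exact_mod_cast Nat.choose_pos hmtns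
      have hCM_le : CM ≤ Ch * B0 := by
        have h1 : CM * (Dm * Dn) ≤ (Ch * B0) * (Dm * Dn) := by
          calc CM * (Dm * Dn) = Ch * Ds := by rw [← hiden]; ring
            _ ≤ Ch * (Dm * Dn * B0) := mul_le_mul_of_nonneg_left hDsB hCh0.le
            _ = (Ch * B0) * (Dm * Dn) := by ring
        exact le_of_mul_le_mul_right h1 (by positivity)
      have hppinv : 1/pp ≤ ((k₁.choose t : ℝ))⁻¹ * B0 := by
        have hCnumR : (Cnum : ℝ) = (k₁.choose t : ℝ) * Ch := by
          rw [hCnum, hCh]; push_cast; ring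
        rw [hpp, one_div_div, hCnumR]
        rw [div_le_iff₀ (by positivity)]
        calc CM ≤ Ch * B0 := hCM_le
          _ = (k₁.choose t : ℝ)⁻¹ * B0 * ((k₁.choose t : ℝ) * Ch) := by
              field_simp
      -- final numeric inequality
      have hlogn_ub : Real.log n ≤ Real.log 2 + Real.log c + 3 * Real.log k := by
        calc Real.log n ≤ Real.log (2*c*(k:ℝ)^3) :=
              Real.log_le_log (by exact_mod_cast hn_pos) hn_ub2
          _ = Real.log 2 + Real.log c + 3 * Real.log k := by
              rw [Real.log_mul (by positivity) (by positivity),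
                Real.log_mul (by norm_num) hc.ne', Real.log_pow]
              push_cast; ring
      have hAk : 4.4 + 2.2*Real.log 2 - 5.8*Real.log c ≤ 1.4 * Real.log k := by
        rw [hA, div_le_iff₀ (by norm_num : (0:ℝ) < 1.4)] at hlogk
        linarith
      have hlogck_eq : Real.log (c*(k:ℝ)) = Real.log c + Real.log k :=
        Real.log_mul hc.ne' (by positivity)
      have hfinal : ((k:ℝ) * Real.log n + 2) * Real.exp (3/4 : ℝ)
          ≤ 8 * (k:ℝ) * Real.log (c*(k:ℝ)) := by
        rw [hlogck_eq]
        exact final_numeric c (k:ℝ) (Real.log n) hc hk1 hlogn hlogn_ub hAk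
      -- conclude
      have hB0nn : 0 ≤ B0 := by rw [hB0]; positivity
      calc ((Fs.image ind).card : ℝ) ≤ N := hFN
        _ ≤ ((k:ℝ) * Real.log n + 2) / pp := hNle
        _ = ((k:ℝ) * Real.log n + 2) * (1/pp) := by ring
        _ ≤ ((k:ℝ) * Real.log n + 2) * ((k₁.choose t : ℝ)⁻¹ * B0) := by
            apply mul_le_mul_of_nonneg_left hppinv (by positivity)
        _ = (k₁.choose t : ℝ)⁻¹ * rk^t * Real.exp ((s:ℝ)/rk) *
            (((k:ℝ)*Real.log n + 2) * Real.exp (3/4 : ℝ)) := by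
            rw [hB0, Real.exp_add]; ring
        _ ≤ (k₁.choose t : ℝ)⁻¹ * rk^t * Real.exp ((s:ℝ)/rk) *
            (8 * (k:ℝ) * Real.log (c*(k:ℝ))) := by
            apply mul_le_mul_of_nonneg_left hfinal (by positivity)
        _ = 8 * (k₁.choose t : ℝ)⁻¹ * rk^t * Real.exp (((k₀:ℝ)+(k₁:ℝ))/rk) * (k:ℝ) *
            Real.log (c*(k:ℝ)) := by
            rw [hsreal]; ring


end Main
end

section
/- For every real α with 0 < α ≤ 1/2 and every real c ≥ 6 there exist a constant C > 0 and an integer K such that for all nonnegative integers k₀, k₁ with k := k₀ + k₁ ≥ K and every integer n with 4·k⁶ ≤ n ≤ k^c, there exists an (n, k₀, k₁, α, 1)-mapping family of size at most (1/α)^k · k^{C·k^{5/6}}. -/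
open Finset

open Finset

lemma choose_le_add (a b j : ℕ) : a.choose b ≤ (a + j).choose (b + j) := by
  induction j with
  | zero => exact le_refl _
  | succ j ih =>
      refine le_trans ih ?_
      rw [show a + (j+1) = (a + j) + 1 by ring, show b + (j+1) = (b + j) + 1 by ring,
        Nat.choose_succ_succ]
      exact Nat.le_add_right _ _

open Finset

-- double-counting identity
lemma choose_identity (n m k₀ k₁ : ℕ) (hm : m ≤ n) (hk1 : k₁ ≤ m) (hk0 : k₀ ≤ n - m) :
    n.choose m * (m.choose k₁ * (n - m).choose k₀) =
      (n - (k₀ + k₁)).choose (m - k₁) * (n.choose k₁ * (n - k₁).choose k₀) := by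
  have h1 : n.choose m * m.choose k₁ = n.choose k₁ * (n - k₁).choose (m - k₁) :=
    Nat.choose_mul hk1
  have h2 : (n - k₁).choose (m - k₁) = (n - k₁).choose (n - m) := by
    have := Nat.choose_symm (show m - k₁ ≤ n - k₁ by omega)
    rw [show n - k₁ - (m - k₁) = n - m by omega] at this
    exact this.symm
  have h3 : (n - k₁).choose (n - m) * (n - m).choose k₀
      = (n - k₁).choose k₀ * ((n - k₁ - k₀)).choose (n - m - k₀) :=
    Nat.choose_mul (by omega)
  have h4 : (n - (k₀ + k₁)).choose (n - m - k₀) = (n - (k₀ + k₁)).choose (m - k₁) := by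
    have := Nat.choose_symm (show n - m - k₀ ≤ n - k₁ - k₀ by omega)
    have e : n - (k₀ + k₁) - (n - m - k₀) = m - k₁ := by omega
    rw [show n - k₁ - k₀ = n - (k₀ + k₁) by omega, e] at this
    exact this.symm
  calc n.choose m * (m.choose k₁ * (n - m).choose k₀)
      = n.choose m * m.choose k₁ * (n - m).choose k₀ := by ring
    _ = n.choose k₁ * ((n - k₁).choose (n - m) * (n - m).choose k₀) := by rw [h1, h2]; ring
    _ = n.choose k₁ * ((n - k₁).choose k₀ * (n - (k₀ + k₁)).choose (m - k₁)) := by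
        rw [h3, show n - k₁ - k₀ = n - (k₀ + k₁) by omega, h4]
    _ = _ := by ring


lemma cov_count (n m k₀ k₁ : ℕ) (S₀ S₁ : Finset (Fin n)) (hd : Disjoint S₀ S₁)
    (h0 : S₀.card = k₀) (h1 : S₁.card = k₁) (hk1m : k₁ ≤ m) :
    (n - (k₀ + k₁)).choose (m - k₁) ≤
      ((Finset.powersetCard m (univ : Finset (Fin n))).filter
        (fun A => S₁ ⊆ A ∧ Disjoint S₀ A)).card := by
  classical
  set T : Finset (Fin n) := (univ \ S₀) \ S₁ with hT
  have hTcard : T.card = n - (k₀ + k₁) := by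
    rw [hT, card_sdiff_of_subset, card_sdiff_of_subset]
    · simp [h0, h1]; omega
    · exact subset_univ _
    · intro x hx
      simp only [mem_sdiff, mem_univ, true_and]
      exact disjoint_right.mp hd hx
  have key := Finset.card_le_card_of_injOn (fun B => B ∪ S₁)
    (s := Finset.powersetCard (m - k₁) T)
    (t := (Finset.powersetCard m (univ : Finset (Fin n))).filter
        (fun A => S₁ ⊆ A ∧ Disjoint S₀ A))
    (by
      intro B hB
      simp only [Finset.mem_coe, Finset.mem_powersetCard] at hB
      obtain ⟨hBT, hBc⟩ := hB
      have hBS₁ : Disjoint B S₁ := by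
        refine disjoint_left.mpr fun x hx hx1 => ?_
        have := hBT hx; rw [hT] at this; simp at this; exact this.2 hx1
      have hBS₀ : Disjoint S₀ B := by
        refine disjoint_right.mpr fun x hx => ?_
        have := hBT hx; rw [hT] at this; simp at this; exact this.1
      simp only [Finset.mem_coe, Finset.mem_filter, Finset.mem_powersetCard]
      refine ⟨⟨subset_univ _, ?_⟩, subset_union_right, ?_⟩
      · rw [card_union_of_disjoint hBS₁, hBc, h1]; omega
      · exact Finset.disjoint_union_right.mpr ⟨hBS₀, hd⟩)
    (by
      intro B hB B' hB' h
      simp only [Finset.mem_coe, Finset.mem_powersetCard] at hB hB'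
      have d : Disjoint B S₁ := by
        refine disjoint_left.mpr fun x hx hx1 => ?_
        have := hB.1 hx; rw [hT] at this; simp at this; exact this.2 hx1
      have d' : Disjoint B' S₁ := by
        refine disjoint_left.mpr fun x hx hx1 => ?_
        have := hB'.1 hx; rw [hT] at this; simp at this; exact this.2 hx1
      have := congrArg (fun s => s \ S₁) h
      simpa [Finset.union_sdiff_cancel_right d, Finset.union_sdiff_cancel_right d'] using this)
  rwa [Finset.card_powersetCard, hTcard] at key

lemma greedy_cover {A B : Type*} [DecidableEq A] (Ω : Finset A) (hΩ : Ω.Nonempty)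
    (cov : A → B → Prop) [∀ a b, Decidable (cov a b)] (N : ℕ)
    (P : Finset B) (hcov : ∀ x ∈ P, N ≤ (Ω.filter (fun a => cov a x)).card) :
    ∀ t : ℕ, ∃ G : Finset A, G ⊆ Ω ∧ G.card ≤ t ∧
      (P.filter (fun x => ∀ a ∈ G, ¬ cov a x)).card * Ω.card ^ t ≤
        P.card * (Ω.card - N) ^ t := by
  intro t
  induction t with
  | zero => exact ⟨∅, empty_subset _, le_refl _, by simpa using Finset.card_filter_le _ _⟩
  | succ t ih =>
    obtain ⟨G, hGΩ, hGc, hle⟩ := ih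
    set P' := P.filter (fun x => ∀ a ∈ G, ¬ cov a x) with hP'
    by_cases hne : P'.Nonempty
    · -- averaging
      have hsum : P'.card * N ≤ ∑ a ∈ Ω, (P'.filter (fun x => cov a x)).card := by
        have swap : ∑ a ∈ Ω, (P'.filter (fun x => cov a x)).card
            = ∑ x ∈ P', (Ω.filter (fun a => cov a x)).card := by
          simp only [Finset.card_filter]
          exact Finset.sum_comm
        rw [swap]
        calc P'.card * N = ∑ _x ∈ P', N := by rw [Finset.sum_const, smul_eq_mul, mul_comm]
          _ ≤ _ := Finset.sum_le_sum fun x hx => hcov x (Finset.mem_filter.mp hx).1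
      obtain ⟨a, haΩ, hamax⟩ := Ω.exists_max_image (fun a => (P'.filter (fun x => cov a x)).card) hΩ
      have hmax : ∑ b ∈ Ω, (P'.filter (fun x => cov b x)).card ≤
          Ω.card * (P'.filter (fun x => cov a x)).card := by
        calc _ ≤ ∑ _b ∈ Ω, (P'.filter (fun x => cov a x)).card :=
              Finset.sum_le_sum fun b hb => hamax b hb
          _ = _ := by rw [Finset.sum_const, smul_eq_mul]
      -- get x in P' to see N ≤ Ω.card
      obtain ⟨x₀, hx₀⟩ := hne
      have hND : N ≤ Ω.card :=
        le_trans (hcov x₀ (Finset.mem_filter.mp hx₀).1) (Finset.card_filter_le _ _)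
      set c := (P'.filter (fun x => cov a x)).card with hc
      set u := (P'.filter (fun x => ¬ cov a x)).card with hu
      have huc : u + c = P'.card := by
        rw [hu, hc, add_comm]; exact Finset.card_filter_add_card_filter_not _
      have hkey : u * Ω.card ≤ P'.card * (Ω.card - N) := by
        have h5 : u * Ω.card + P'.card * N ≤ P'.card * (Ω.card - N) + P'.card * N := by
          calc u * Ω.card + P'.card * N ≤ u * Ω.card + Ω.card * c :=
                Nat.add_le_add_left (le_trans hsum hmax) _
            _ = (u + c) * Ω.card := by ring
            _ = P'.card * Ω.card := by rw [huc]
            _ = P'.card * ((Ω.card - N) + N) := by rw [Nat.sub_add_cancel hND]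
            _ = P'.card * (Ω.card - N) + P'.card * N := by ring
        exact Nat.le_of_add_le_add_right h5
      refine ⟨insert a G, Finset.insert_subset haΩ hGΩ, le_trans (Finset.card_insert_le _ _)
        (Nat.succ_le_succ hGc), ?_⟩
      have hfilt : P.filter (fun x => ∀ b ∈ insert a G, ¬ cov b x)
          = P'.filter (fun x => ¬ cov a x) := by
        rw [hP', Finset.filter_filter]
        apply Finset.filter_congr
        intro x _
        simp only [Finset.mem_insert]
        constructor
        · intro h; exact ⟨fun b hb => h b (Or.inr hb), h a (Or.inl rfl)⟩
        · rintro ⟨h1, h2⟩ b (rfl | hb); exact h2; exact h1 b hb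
      rw [hfilt]
      calc u * Ω.card ^ (t + 1) = (u * Ω.card) * Ω.card ^ t := by ring
        _ ≤ (P'.card * (Ω.card - N)) * Ω.card ^ t := Nat.mul_le_mul_right _ hkey
        _ = (P'.card * Ω.card ^ t) * (Ω.card - N) := by ring
        _ ≤ (P.card * (Ω.card - N) ^ t) * (Ω.card - N) := Nat.mul_le_mul_right _ hle
        _ = P.card * (Ω.card - N) ^ (t + 1) := by ring
    · refine ⟨G, hGΩ, le_trans hGc (Nat.le_succ _), ?_⟩
      rw [Finset.not_nonempty_iff_eq_empty] at hne
      rw [← hP', hne]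
      simp

set_option maxHeartbeats 1000000 in
/-- For every `0 < α ≤ 1/2` and `c ≥ 6` there are `C > 0` and `K` such that for all
`k₀, k₁` with `k := k₀ + k₁ ≥ K` and all `n` with `4·k⁶ ≤ n ≤ k^c`, there is an
`(n,k₀,k₁,α,1)`-mapping family of size at most `(1/α)^k · k^{C·k^{5/6}}`. -/
theorem mapping_family_poly_universe (α : ℝ) (hα0 : 0 < α) (hα1 : α ≤ 1 / 2)
    (c : ℝ) (hc : 6 ≤ c) :
    ∃ C : ℝ, 0 < C ∧ ∃ K : ℕ, ∀ k₀ k₁ : ℕ, K ≤ k₀ + k₁ →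
      ∀ n : ℕ, 4 * (k₀ + k₁) ^ 6 ≤ n → (n : ℝ) ≤ ((k₀ + k₁ : ℕ) : ℝ) ^ c →
      ∃ F : Finset (Fin n → Fin 2),
        IsMappingFamily n k₀ k₁ α 1 F ∧
          (F.card : ℝ) ≤
            (1 / α) ^ (k₀ + k₁) *
              ((k₀ + k₁ : ℕ) : ℝ) ^
                (C * ((k₀ + k₁ : ℕ) : ℝ) ^ ((5 : ℝ) / 6)) := by
  classical
  obtain ⟨M, hM⟩ := exists_nat_ge (1 / α)
  obtain ⟨Mc, hMc⟩ := exists_nat_ge (2 * c + 1)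
  refine ⟨1, one_pos, max (max M Mc) 9, ?_⟩
  intro k₀ k₁ hK n hn4 hnc
  set k := k₀ + k₁ with hkdef
  have hk9 : 9 ≤ k := le_trans (le_max_right _ _) hK
  have hkM : M ≤ k := le_trans (le_trans (le_max_left _ _) (le_max_left _ _)) hK
  have hkMc : Mc ≤ k := le_trans (le_trans (le_max_right _ _) (le_max_left _ _)) hK
  have hk1 : 1 ≤ k := by omega
  have hn1 : 1 ≤ n := by
    have : 1 ≤ k ^ 6 := Nat.one_le_pow _ _ (by omega)
    omega
  -- real versions
  have hkR9 : (9 : ℝ) ≤ (k : ℝ) := by exact_mod_cast hk9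
  have hkR1 : (1 : ℝ) ≤ (k : ℝ) := by exact_mod_cast hk1
  have hnR : (4 : ℝ) * (k : ℝ) ^ 6 ≤ (n : ℝ) := by exact_mod_cast hn4
  have hnR1 : (1 : ℝ) ≤ (n : ℝ) := by exact_mod_cast hn1
  have hαk1 : (1 : ℝ) ≤ α * (k : ℝ) := by
    have h1 : 1 / α ≤ (k : ℝ) := le_trans hM (by exact_mod_cast hkM)
    rw [div_le_iff₀ hα0] at h1
    linarith [h1]
  -- key: α·n is large
  have hP2 : 2 * (k : ℝ) * ((k : ℝ) + 1) + (k : ℝ) + 2 ≤ α * (n : ℝ) := by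
    have h1 : 4 * (k : ℝ) ^ 5 ≤ α * (4 * (k : ℝ) ^ 6) := by
      have := mul_le_mul_of_nonneg_left hαk1 (show (0:ℝ) ≤ 4 * (k:ℝ)^5 by positivity)
      calc (4:ℝ) * (k:ℝ)^5 = 4 * (k:ℝ)^5 * 1 := by ring
        _ ≤ 4 * (k:ℝ)^5 * (α * k) := this
        _ = α * (4 * (k:ℝ)^6) := by ring
    have h2 : 2 * (k : ℝ) * ((k : ℝ) + 1) + (k : ℝ) + 2 ≤ 4 * (k : ℝ) ^ 5 := by
      have h25 : (k:ℝ)^2 ≤ (k:ℝ)^5 := pow_le_pow_right₀ hkR1 (by norm_num)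
      nlinarith [h25, hkR9, mul_le_mul_of_nonneg_left hkR9 (show (0:ℝ) ≤ (k:ℝ) by positivity)]
    have h3 : α * (4 * (k : ℝ) ^ 6) ≤ α * (n : ℝ) :=
      mul_le_mul_of_nonneg_left hnR hα0.le
    linarith
  have hαn_pos : (0 : ℝ) < α * (n : ℝ) := by positivity
  set m := ⌈α * (n : ℝ)⌉₊ with hmdef
  have hmlb : α * (n : ℝ) ≤ (m : ℝ) := Nat.le_ceil _
  have hmub : (m : ℝ) < α * (n : ℝ) + 1 := Nat.ceil_lt_add_one (by positivity)
  have hkm : k ≤ m := by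
    have : (k : ℝ) ≤ (m : ℝ) := by nlinarith [hP2, hmlb]
    exact_mod_cast this
  have hk1m : k₁ ≤ m := le_trans (by omega) hkm
  have hmnk : m + k < n := by
    have hαhalf : α * (n : ℝ) ≤ (n : ℝ) / 2 := by
      have := mul_le_mul_of_nonneg_right hα1 (show (0:ℝ) ≤ (n : ℝ) by positivity)
      linarith only [this]
    have hkn2 : (k : ℝ) + 1 < (n : ℝ) / 2 := by nlinarith [hkR9]
    have : (m : ℝ) + (k : ℝ) < (n : ℝ) := by linarith
    exact_mod_cast this
  have hmn : m ≤ n := by omega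
  have hk0nm : k₀ ≤ n - m := by omega
  set D := n.choose m with hDdef
  set N := (n - k).choose (m - k₁) with hNdef
  have hDpos : 0 < D := Nat.choose_pos hmn
  have hNpos : 0 < N := Nat.choose_pos (by omega)
  have hNleD : N ≤ D := by
    have h1 : N ≤ (n - k + k₁).choose ((m - k₁) + k₁) := choose_le_add _ _ _
    have e1 : n - k + k₁ = n - k₀ := by omega
    have e2 : m - k₁ + k₁ = m := by omega
    rw [e1, e2] at h1
    exact le_trans h1 (Nat.choose_le_choose _ (by omega))
  -- the family universe
  set Ω := Finset.powersetCard m (univ : Finset (Fin n)) with hΩdef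
  have hΩcard : Ω.card = D := by
    rw [hΩdef, Finset.card_powersetCard, card_univ, Fintype.card_fin]
  have hΩne : Ω.Nonempty := by
    rw [hΩdef, Finset.powersetCard_nonempty, card_univ, Fintype.card_fin]; exact hmn
  set P := ((Finset.powersetCard k₀ (univ : Finset (Fin n))) ×ˢ
      (Finset.powersetCard k₁ (univ : Finset (Fin n)))).filter
      (fun p => Disjoint p.1 p.2) with hPdef
  set cov : Finset (Fin n) → Finset (Fin n) × Finset (Fin n) → Prop :=
    fun A p => p.2 ⊆ A ∧ Disjoint p.1 A with hcovdef
  have hcov : ∀ x ∈ P, N ≤ (Ω.filter (fun a => cov a x)).card := by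
    intro x hx
    rw [hPdef, Finset.mem_filter, Finset.mem_product, Finset.mem_powersetCard,
      Finset.mem_powersetCard] at hx
    exact cov_count n m k₀ k₁ x.1 x.2 hx.2 hx.1.1.2 hx.1.2.2 hk1m
  set t := ⌈(2 / α ^ k) * ((k : ℝ) * Real.log (n : ℝ) + 1)⌉₊ with htdef
  obtain ⟨G, hGΩ, hGt, hle⟩ := greedy_cover Ω hΩne cov N P hcov t
  rw [hΩcard] at hle
  have hle' : (P.filter (fun x => ∀ a ∈ G, ¬ cov a x)).card * D ^ t ≤ P.card * (D - N) ^ t := by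
    convert hle using 4
  clear hle
  -- cardinality of P
  have hPcard : P.card ≤ n ^ k := by
    refine le_trans (Finset.card_filter_le _ _) ?_
    rw [Finset.card_product, Finset.card_powersetCard, Finset.card_powersetCard,
      card_univ, Fintype.card_fin]
    calc n.choose k₀ * n.choose k₁ ≤ n ^ k₀ * n ^ k₁ :=
          Nat.mul_le_mul (Nat.choose_le_pow _ _) (Nat.choose_le_pow _ _)
      _ = n ^ k := by rw [← pow_add]
  -- the key probability bound
  have hND : (D : ℝ) * α ^ k ≤ 2 * (N : ℝ) := by
    have hid := choose_identity n m k₀ k₁ hmn hk1m hk0nm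
    have hidR : (D : ℝ) * ((m.choose k₁ : ℝ) * (((n - m).choose k₀ : ℕ) : ℝ))
        = (N : ℝ) * ((n.choose k₁ : ℝ) * (((n - k₁).choose k₀ : ℕ) : ℝ)) := by
      exact_mod_cast hid
    set A1 : ℝ := (m.choose k₁ : ℝ) with hA1
    set A2 : ℝ := (((n - m).choose k₀ : ℕ) : ℝ) with hA2
    set B1 : ℝ := (n.choose k₁ : ℝ) with hB1
    set B2 : ℝ := (((n - k₁).choose k₀ : ℕ) : ℝ) with hB2
    have hA1pos : 0 < A1 := by rw [hA1]; exact_mod_cast Nat.choose_pos hk1m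
    have hA2pos : 0 < A2 := by rw [hA2]; exact_mod_cast Nat.choose_pos hk0nm
    set q : ℝ := α * (n : ℝ) - ((k : ℝ) + 1) with hq
    have hqpos : (0 : ℝ) < q := by
      have h0 : (0:ℝ) ≤ 2 * (k : ℝ) * ((k : ℝ) + 1) := by positivity
      simp only [hq]; linarith only [hP2, h0]
    have hkk1 : ((k₁ : ℕ) : ℝ) ≤ (k : ℝ) := by exact_mod_cast (show k₁ ≤ k by omega)
    have hkk0 : ((k₀ : ℕ) : ℝ) ≤ (k : ℝ) := by exact_mod_cast (show k₀ ≤ k by omega)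
    have hαhalf : α * (n : ℝ) ≤ (n : ℝ) / 2 := by
      have := mul_le_mul_of_nonneg_right hα1 (show (0:ℝ) ≤ (n : ℝ) by positivity)
      linarith only [this]
    have hBA : B1 * B2 * α ^ k ≤ 2 * (A1 * A2) := by
      have d1 : B1 * (k₁.factorial : ℝ) = (n.descFactorial k₁ : ℝ) := by
        rw [Nat.descFactorial_eq_factorial_mul_choose]; push_cast [hB1]; ring
      have d2 : B2 * (k₀.factorial : ℝ) = ((n - k₁).descFactorial k₀ : ℝ) := by
        rw [Nat.descFactorial_eq_factorial_mul_choose]; push_cast [hB2]; ring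
      have d3 : A1 * (k₁.factorial : ℝ) = (m.descFactorial k₁ : ℝ) := by
        rw [Nat.descFactorial_eq_factorial_mul_choose]; push_cast [hA1]; ring
      have d4 : A2 * (k₀.factorial : ℝ) = ((n - m).descFactorial k₀ : ℝ) := by
        rw [Nat.descFactorial_eq_factorial_mul_choose]; push_cast [hA2]; ring
      have u1 : (n.descFactorial k₁ : ℝ) ≤ (n : ℝ) ^ k₁ := by
        exact_mod_cast Nat.descFactorial_le_pow n k₁
      have u2 : ((n - k₁).descFactorial k₀ : ℝ) ≤ (n : ℝ) ^ k₀ := by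
        have h := le_trans (Nat.descFactorial_le_pow (n - k₁) k₀)
          (Nat.pow_le_pow_left (Nat.sub_le n k₁) k₀)
        exact_mod_cast h
      have l3 : q ^ k₁ ≤ (m.descFactorial k₁ : ℝ) := by
        have h := Nat.pow_sub_le_descFactorial m k₁
        have hcast : (((m + 1 - k₁ : ℕ)) : ℝ) = (m : ℝ) + 1 - (k₁ : ℝ) := by
          have : k₁ ≤ m + 1 := by omega
          push_cast [this]; ring
        have hqle : q ≤ (m : ℝ) + 1 - (k₁ : ℝ) := by
          simp only [hq]; linarith only [hmlb, hkk1]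
        calc q ^ k₁ ≤ ((m : ℝ) + 1 - (k₁ : ℝ)) ^ k₁ := pow_le_pow_left₀ hqpos.le hqle k₁
          _ = (((m + 1 - k₁ : ℕ)) : ℝ) ^ k₁ := by rw [hcast]
          _ ≤ _ := by exact_mod_cast h
      have l4 : q ^ k₀ ≤ ((n - m).descFactorial k₀ : ℝ) := by
        have h := Nat.pow_sub_le_descFactorial (n - m) k₀
        have hnm : (((n - m : ℕ)) : ℝ) = (n : ℝ) - (m : ℝ) := by push_cast [hmn]; ring
        have hcast : (((n - m + 1 - k₀ : ℕ)) : ℝ) = (n : ℝ) - (m : ℝ) + 1 - (k₀ : ℝ) := by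
          have h1 : k₀ ≤ n - m + 1 := by omega
          push_cast [h1, hmn]; ring
        have hqle : q ≤ (n : ℝ) - (m : ℝ) + 1 - (k₀ : ℝ) := by
          simp only [hq]; linarith only [hmub, hαhalf, hkk0]
        calc q ^ k₀ ≤ ((n : ℝ) - (m : ℝ) + 1 - (k₀ : ℝ)) ^ k₀ := pow_le_pow_left₀ hqpos.le hqle k₀
          _ = (((n - m + 1 - k₀ : ℕ)) : ℝ) ^ k₀ := by rw [hcast]
          _ ≤ _ := by exact_mod_cast h
      have bern : (α * (n : ℝ)) ^ k ≤ 2 * q ^ k := by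
        set x : ℝ := -(((k : ℝ) + 1) / (α * (n : ℝ))) with hx
        have hx2 : (-2 : ℝ) ≤ x := by
          rw [hx, neg_le, neg_neg, div_le_iff₀ hαn_pos]
          linarith only [hP2, hkR1, hαn_pos.le, sq_nonneg ((k:ℝ))]
        have hb := one_add_mul_le_pow hx2 k
        have h1x : 1 + x = q / (α * (n : ℝ)) := by
          rw [hx, hq]; field_simp; ring
        have hhalf : (1 : ℝ) / 2 ≤ 1 + (k : ℝ) * x := by
          rw [hx]
          have hdiv : (k : ℝ) * (((k : ℝ) + 1) / (α * (n : ℝ))) ≤ 1 / 2 := by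
            rw [mul_div_assoc']
            rw [div_le_iff₀ hαn_pos]
            linarith only [hP2, sq_nonneg ((k:ℝ)), hkR1]
          linarith only [hdiv]
        have h2 := le_trans hhalf hb
        rw [h1x, div_pow] at h2
        rw [le_div_iff₀ (pow_pos hαn_pos k)] at h2
        linarith only [h2]
      -- combine
      have comb : (n.descFactorial k₁ : ℝ) * ((n - k₁).descFactorial k₀ : ℝ) * α ^ k
          ≤ 2 * ((m.descFactorial k₁ : ℝ) * ((n - m).descFactorial k₀ : ℝ)) := by
        have c1 : (n.descFactorial k₁ : ℝ) * ((n - k₁).descFactorial k₀ : ℝ) * α ^ k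
            ≤ (n : ℝ) ^ k₁ * (n : ℝ) ^ k₀ * α ^ k := by
          have := mul_le_mul u1 u2 (by positivity) (by positivity)
          exact mul_le_mul_of_nonneg_right this (by positivity)
        have c2 : (n : ℝ) ^ k₁ * (n : ℝ) ^ k₀ * α ^ k = (α * (n : ℝ)) ^ k := by
          rw [← pow_add, mul_pow, add_comm k₁ k₀, ← hkdef]; ring
        have c3 : 2 * (q ^ k₁ * q ^ k₀)
            ≤ 2 * ((m.descFactorial k₁ : ℝ) * ((n - m).descFactorial k₀ : ℝ)) := by
          have := mul_le_mul l3 l4 (by positivity) (by positivity)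
          linarith only [this]
        have c4 : q ^ k = q ^ k₁ * q ^ k₀ := by rw [← pow_add, add_comm k₁ k₀, ← hkdef]
        calc (n.descFactorial k₁ : ℝ) * ((n - k₁).descFactorial k₀ : ℝ) * α ^ k
            ≤ (α * (n : ℝ)) ^ k := by rw [← c2]; exact c1
          _ ≤ 2 * q ^ k := bern
          _ = 2 * (q ^ k₁ * q ^ k₀) := by rw [c4]
          _ ≤ _ := c3
      have hfpos : (0 : ℝ) < (k₁.factorial : ℝ) * (k₀.factorial : ℝ) := by positivity
      have expand : B1 * B2 * α ^ k * ((k₁.factorial : ℝ) * (k₀.factorial : ℝ))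
          = (B1 * (k₁.factorial : ℝ)) * (B2 * (k₀.factorial : ℝ)) * α ^ k := by ring
      have expand2 : 2 * (A1 * A2) * ((k₁.factorial : ℝ) * (k₀.factorial : ℝ))
          = 2 * ((A1 * (k₁.factorial : ℝ)) * (A2 * (k₀.factorial : ℝ))) := by ring
      have final : B1 * B2 * α ^ k * ((k₁.factorial : ℝ) * (k₀.factorial : ℝ))
          ≤ 2 * (A1 * A2) * ((k₁.factorial : ℝ) * (k₀.factorial : ℝ)) := by
        rw [expand, expand2, d1, d2, d3, d4]; exact comb
      exact le_of_mul_le_mul_right final hfpos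
    have hA12 : (0 : ℝ) < A1 * A2 := mul_pos hA1pos hA2pos
    have final : (D : ℝ) * α ^ k * (A1 * A2) ≤ 2 * (N : ℝ) * (A1 * A2) := by
      calc (D : ℝ) * α ^ k * (A1 * A2) = ((D : ℝ) * (A1 * A2)) * α ^ k := by ring
        _ = ((N : ℝ) * (B1 * B2)) * α ^ k := by rw [hidR]
        _ = (N : ℝ) * (B1 * B2 * α ^ k) := by ring
        _ ≤ (N : ℝ) * (2 * (A1 * A2)) := by
            exact mul_le_mul_of_nonneg_left hBA (by positivity)
        _ = 2 * (N : ℝ) * (A1 * A2) := by ring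
    exact le_of_mul_le_mul_right final hA12
  -- everything is covered
  have hcovered : P.filter (fun x => ∀ a ∈ G, ¬ cov a x) = ∅ := by
    have hlt : P.card * (D - N) ^ t < D ^ t := by
      have hltR : ((P.card : ℝ)) * (((D - N : ℕ)) : ℝ) ^ t < (D : ℝ) ^ t := by
        have hcast : (((D - N : ℕ)) : ℝ) = (D : ℝ) - (N : ℝ) := by
          push_cast [hNleD]; ring
        rw [hcast]
        set p : ℝ := α ^ k / 2 with hp
        have hppos : 0 < p := by positivity
        have hα1' : α ≤ 1 := by linarith
        have hphalf : p ≤ 1 / 2 := by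
          have h9 : α ^ k ≤ 1 := pow_le_one₀ hα0.le hα1'
          simp only [hp]; linarith only [h9]
        have hDN : (D : ℝ) - (N : ℝ) ≤ (1 - p) * (D : ℝ) := by
          have h9 : p * (D : ℝ) ≤ (N : ℝ) := by simp only [hp]; linarith only [hND]
          linarith only [h9]
        have hDN0 : (0 : ℝ) ≤ (D : ℝ) - (N : ℝ) := by
          have h9 : (N : ℝ) ≤ (D : ℝ) := by exact_mod_cast hNleD
          linarith only [h9]
        have hPn : (P.card : ℝ) ≤ (n : ℝ) ^ k := by exact_mod_cast hPcard
        have hkey : (n : ℝ) ^ k * (1 - p) ^ t < 1 := by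
          have h1p : 1 - p ≤ Real.exp (-p) := by linarith only [Real.add_one_le_exp (-p)]
          have h1p0 : (0 : ℝ) ≤ 1 - p := by linarith only [hphalf]
          have hpow : (1 - p) ^ t ≤ Real.exp (-p) ^ t := pow_le_pow_left₀ h1p0 h1p t
          have hexp : Real.exp (-p) ^ t = Real.exp (-(p * (t : ℝ))) := by
            rw [← Real.exp_nat_mul]; ring_nf
          have hpt : (k : ℝ) * Real.log (n : ℝ) + 1 ≤ p * (t : ℝ) := by
            have hceil := Nat.le_ceil ((2 / α ^ k) * ((k : ℝ) * Real.log (n : ℝ) + 1))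
            have := mul_le_mul_of_nonneg_left hceil hppos.le
            calc (k : ℝ) * Real.log (n : ℝ) + 1
                = p * ((2 / α ^ k) * ((k : ℝ) * Real.log (n : ℝ) + 1)) := by
                  simp only [hp]; field_simp
              _ ≤ p * (t : ℝ) := this
          have hnk : (n : ℝ) ^ k = Real.exp ((k : ℝ) * Real.log (n : ℝ)) := by
            rw [Real.exp_nat_mul, Real.exp_log (by linarith only [hnR1] : (0:ℝ) < (n : ℝ))]
          calc (n : ℝ) ^ k * (1 - p) ^ t ≤ (n : ℝ) ^ k * Real.exp (-(p * (t : ℝ))) := by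
                refine mul_le_mul_of_nonneg_left ?_ (by positivity)
                rw [← hexp]; exact hpow
            _ ≤ (n : ℝ) ^ k * Real.exp (-((k : ℝ) * Real.log (n : ℝ) + 1)) := by
                refine mul_le_mul_of_nonneg_left ?_ (by positivity)
                exact Real.exp_le_exp.mpr (by linarith only [hpt])
            _ = Real.exp (-1) := by
                rw [hnk, ← Real.exp_add]; ring_nf
            _ < 1 := by
                rw [Real.exp_lt_one_iff]; norm_num
        calc (P.card : ℝ) * ((D : ℝ) - (N : ℝ)) ^ t
            ≤ (n : ℝ) ^ k * ((1 - p) * (D : ℝ)) ^ t := by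
              refine mul_le_mul hPn (pow_le_pow_left₀ hDN0 hDN t) (by positivity) (by positivity)
          _ = ((n : ℝ) ^ k * (1 - p) ^ t) * (D : ℝ) ^ t := by rw [mul_pow]; ring
          _ < 1 * (D : ℝ) ^ t := by
              refine mul_lt_mul_of_pos_right hkey ?_
              have : (0 : ℝ) < (D : ℝ) := by exact_mod_cast hDpos
              positivity
          _ = (D : ℝ) ^ t := one_mul _
      exact_mod_cast hltR
    rw [← Finset.card_eq_zero]
    by_contra hcc
    have h1 : 1 ≤ (P.filter (fun x => ∀ a ∈ G, ¬ cov a x)).card := Nat.pos_of_ne_zero hcc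
    have h2 : D ^ t ≤ (P.filter (fun x => ∀ a ∈ G, ¬ cov a x)).card * D ^ t := by
      calc D ^ t = 1 * D ^ t := (one_mul _).symm
        _ ≤ _ := Nat.mul_le_mul_right _ h1
    exact absurd (lt_of_le_of_lt (le_trans h2 hle') hlt) (lt_irrefl _)
  -- the family
  set F := G.image (fun A => fun x => if x ∈ A then (1 : Fin 2) else 0) with hFdef
  refine ⟨F, ⟨?_, ?_⟩, ?_⟩
  · intro f hf
    rw [hFdef, Finset.mem_image] at hf
    obtain ⟨A, hA, rfl⟩ := hf
    have hAm : A.card = m := by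
      have := hGΩ hA
      rw [hΩdef, Finset.mem_powersetCard] at this
      exact this.2
    have : (Finset.univ.filter fun x => (if x ∈ A then (1 : Fin 2) else 0) = 1) = A := by
      ext x
      simp only [Finset.mem_filter, Finset.mem_univ, true_and]
      by_cases hx : x ∈ A <;> simp [hx]
    rw [this, hAm]
  · intro S₀ S₁ hd h0 h1
    have hmem : (S₀, S₁) ∈ P := by
      rw [hPdef, Finset.mem_filter, Finset.mem_product, Finset.mem_powersetCard,
        Finset.mem_powersetCard]
      exact ⟨⟨⟨subset_univ _, h0⟩, ⟨subset_univ _, h1⟩⟩, hd⟩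
    have hnotin : (S₀, S₁) ∉ P.filter (fun x => ∀ a ∈ G, ¬ cov a x) := by
      rw [hcovered]; exact Finset.notMem_empty _
    rw [Finset.mem_filter] at hnotin
    push_neg at hnotin
    obtain ⟨A, hAG, hcovA⟩ := hnotin hmem
    rw [hcovdef] at hcovA
    simp only [not_not] at hcovA
    obtain ⟨hS₁A, hS₀A⟩ := hcovA
    refine ⟨fun x => if x ∈ A then (1 : Fin 2) else 0,
      Finset.mem_image_of_mem _ hAG, ?_, ?_⟩
    · intro x hx
      have : x ∉ A := Finset.disjoint_left.mp hS₀A hx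
      simp [this]
    · have : (S₁.filter fun x => (if x ∈ A then (1 : Fin 2) else 0) = 1) = S₁ := by
        ext x
        simp only [Finset.mem_filter, and_iff_left_iff_imp]
        intro hx
        simp [hS₁A hx]
      rw [this, h1, one_mul, Nat.ceil_natCast]
  · -- size bound
    have hFG : F.card ≤ t := le_trans (Finset.card_image_le) hGt
    have hlogn0 : (0:ℝ) ≤ Real.log (n : ℝ) := Real.log_nonneg hnR1
    have hXnn : (0:ℝ) ≤ (2 / α ^ k) * ((k : ℝ) * Real.log (n : ℝ) + 1) := by positivity
    have ht1 : (t : ℝ) < (2 / α ^ k) * ((k : ℝ) * Real.log (n : ℝ) + 1) + 1 :=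
      Nat.ceil_lt_add_one hXnn
    have hinv : ((1 : ℝ) / α) ^ k = 1 / α ^ k := by rw [div_pow, one_pow]
    have h1le : (1 : ℝ) ≤ (1 / α) ^ k := by
      have h2 : (1:ℝ) ≤ 1 / α := by rw [le_div_iff₀ hα0]; linarith only [hα1]
      exact one_le_pow₀ h2
    have hkpos : (0 : ℝ) < (k : ℝ) := by linarith only [hkR1]
    have hlogn : Real.log (n : ℝ) ≤ c * Real.log (k : ℝ) := by
      have h := Real.log_le_log (by linarith : (0:ℝ) < (n : ℝ)) hnc
      rwa [Real.log_rpow hkpos] at h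
    have hP3 : 2 * c * (k : ℝ) * Real.log (k : ℝ) + 3 ≤ (k : ℝ) ^ ((k : ℝ) ^ ((5 : ℝ) / 6)) := by
      have h12 : (3 : ℝ) ≤ (k : ℝ) ^ ((1 : ℝ) / 2) := by
        have hs : ((k : ℝ) ^ ((1 : ℝ) / 2)) ^ (2 : ℕ) = (k : ℝ) := by
          rw [← Real.rpow_natCast ((k : ℝ) ^ ((1 : ℝ) / 2)) 2, ← Real.rpow_mul hkpos.le]
          norm_num
        nlinarith only [Real.rpow_nonneg hkpos.le ((1 : ℝ) / 2), hkR9, hs]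
      have h56 : (3 : ℝ) ≤ (k : ℝ) ^ ((5 : ℝ) / 6) :=
        le_trans h12 (Real.rpow_le_rpow_of_exponent_le hkR1 (by norm_num))
      have hrp : (k : ℝ) ^ (3 : ℕ) ≤ (k : ℝ) ^ ((k : ℝ) ^ ((5 : ℝ) / 6)) := by
        rw [← Real.rpow_natCast (k : ℝ) 3]
        exact Real.rpow_le_rpow_of_exponent_le hkR1 (by push_cast; linarith only [h56])
      have hlogk : Real.log (k : ℝ) ≤ (k : ℝ) := by
        linarith only [Real.log_le_sub_one_of_pos hkpos]
      have hck : 2 * c + 1 ≤ (k : ℝ) := le_trans hMc (by exact_mod_cast hkMc)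
      have hlogk0 : (0:ℝ) ≤ Real.log (k : ℝ) := Real.log_nonneg hkR1
      have hc0 : (0:ℝ) ≤ 2 * c * (k : ℝ) := by
        apply mul_nonneg (by linarith only [hc]) hkpos.le
      have hA := mul_le_mul_of_nonneg_left hlogk hc0
      have hB := mul_le_mul_of_nonneg_right hck (sq_nonneg (k : ℝ))
      have hk2 : (3:ℝ) ≤ (k : ℝ)^2 := by nlinarith only [hkR9]
      have hmain : 2 * c * (k : ℝ) * Real.log (k : ℝ) + 3 ≤ (k : ℝ) ^ (3 : ℕ) := by
        linarith only [hA, hB, hk2]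
      linarith only [hrp, hmain]
    have hlog2 : 2 * ((k : ℝ) * Real.log (n : ℝ)) + 3 ≤ 2 * c * (k : ℝ) * Real.log (k : ℝ) + 3 := by
      have h9 := mul_le_mul_of_nonneg_left hlogn hkpos.le
      linarith only [h9]
    have hpow0 : (0:ℝ) ≤ (1 / α) ^ k := by positivity
    calc (F.card : ℝ) ≤ (t : ℝ) := by exact_mod_cast hFG
      _ ≤ (2 / α ^ k) * ((k : ℝ) * Real.log (n : ℝ) + 1) + 1 := ht1.le
      _ = (1 / α) ^ k * (2 * ((k : ℝ) * Real.log (n : ℝ)) + 2) + 1 := by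
          rw [hinv]; field_simp
      _ ≤ (1 / α) ^ k * (2 * ((k : ℝ) * Real.log (n : ℝ)) + 2) + (1 / α) ^ k := by
          linarith only [h1le]
      _ = (1 / α) ^ k * (2 * ((k : ℝ) * Real.log (n : ℝ)) + 3) := by ring
      _ ≤ (1 / α) ^ k * (2 * c * (k : ℝ) * Real.log (k : ℝ) + 3) :=
          mul_le_mul_of_nonneg_left hlog2 hpow0
      _ ≤ (1 / α) ^ k * ((k : ℝ) ^ ((k : ℝ) ^ ((5 : ℝ) / 6))) :=
          mul_le_mul_of_nonneg_left hP3 hpow0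
      _ = (1 / α) ^ k * ((k : ℝ) ^ ((1:ℝ) * (k : ℝ) ^ ((5 : ℝ) / 6))) := by rw [one_mul]
end
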